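/- For a d×c integer matrix M and a d×c' integer matrix N, N is a 0-extension of M if and only if N = M·S for some simple c×c' histogram S. -/

import Mathlib

/-- A nonnegative integer `r × c` matrix `H` is a histogram of degree `s` if `s > 0`,
every row of `H` sums to `s`, and for every `1 ≤ i < r` and `0 ≤ j < c` (here rendered
0-indexed) the sum of the first `j` entries of row `i` is at least the sum of the
first `j+1` entries of row `i+1`. -/
def IsHistogram {r c : ℕ} (H : Matrix (Fin r) (Fin c) ℤ) (s : ℕ) : Prop :=
  0 < s ∧
  (∀ i j, 0 ≤ H i j) ∧
  (∀ i, ∑ j, H i j = (s : ℤ)) ∧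
  ∀ (i j : ℕ) (hi : i + 1 < r), j < c →
    ∑ l ∈ Finset.univ.filter (fun l : Fin c => (l : ℕ) < j + 1), H ⟨i + 1, hi⟩ l ≤
      ∑ l ∈ Finset.univ.filter (fun l : Fin c => (l : ℕ) < j), H ⟨i, Nat.lt_of_succ_lt hi⟩ l

/-- `N` is a 0-extension of `M` if `N` is obtained from `M` by inserting additional zero
columns at arbitrary positions: there is a strictly monotone map of column indices along
which `N` agrees with `M`, all other columns of `N` being zero. -/
def IsZeroExt {d c c' : ℕ} (M : Matrix (Fin d) (Fin c) ℤ) (N : Matrix (Fin d) (Fin c') ℤ) :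
    Prop :=
  ∃ f : Fin c → Fin c', StrictMono f ∧
    (∀ i j, N i (f j) = M i j) ∧
    (∀ i j', (∀ j, f j ≠ j') → N i j' = 0)

/-- A nonnegative integer vector summing to 1 is an indicator vector. -/
lemma row_indicator {n : ℕ} (v : Fin n → ℤ) (h0 : ∀ j, 0 ≤ v j) (h1 : ∑ j, v j = 1) :
    ∃ j0, ∀ j, v j = if j = j0 then 1 else 0 := by
  have hne : ∃ j0, v j0 ≠ 0 := by
    by_contra h
    push_neg at h
    simp [Finset.sum_congr rfl fun j _ => h j] at h1
  obtain ⟨j0, hj0⟩ := hne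
  have hsplit : v j0 + ∑ j ∈ Finset.univ.erase j0, v j = 1 := by
    rw [← Finset.add_sum_erase _ _ (Finset.mem_univ j0)] at h1
    exact h1
  have hrest0 : 0 ≤ ∑ j ∈ Finset.univ.erase j0, v j :=
    Finset.sum_nonneg fun j _ => h0 j
  have hv1 : v j0 = 1 := by
    have h1le : 1 ≤ v j0 := (h0 j0).lt_of_ne (Ne.symm hj0)
    omega
  have hrest : ∑ j ∈ Finset.univ.erase j0, v j = 0 := by omega
  have hzero : ∀ j ∈ Finset.univ.erase j0, v j = 0 :=
    (Finset.sum_eq_zero_iff_of_nonneg fun j _ => h0 j).mp hrest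
  refine ⟨j0, fun j => ?_⟩
  by_cases hj : j = j0
  · simp [hj, hv1]
  · simp [hj, hzero j (Finset.mem_erase.mpr ⟨hj, Finset.mem_univ j⟩)]

lemma filter_indicator_sum {n : ℕ} (a : Fin n) (j : ℕ) :
    ∑ l ∈ Finset.univ.filter (fun l : Fin n => (l : ℕ) < j),
        (if l = a then (1 : ℤ) else 0) = if (a : ℕ) < j then 1 else 0 := by
  rw [Finset.sum_ite_eq' (Finset.univ.filter fun l : Fin n => (l : ℕ) < j) a fun _ => (1 : ℤ)]
  simp

/-- For a `d × c` integer matrix `M` and a `d × c'` integer matrix `N`, `N` is a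
0-extension of `M` if and only if `N = M * S` for some simple `c × c'` histogram `S`. -/
theorem zeroExt_iff_mul_simple_histogram {d c c' : ℕ}
    (M : Matrix (Fin d) (Fin c) ℤ) (N : Matrix (Fin d) (Fin c') ℤ) :
    IsZeroExt M N ↔ ∃ S : Matrix (Fin c) (Fin c') ℤ, IsHistogram S 1 ∧ N = M * S := by
  constructor
  · rintro ⟨f, hf, hagree, hzero⟩
    refine ⟨fun k j' => if j' = f k then 1 else 0, ⟨one_pos, ?_, ?_, ?_⟩, ?_⟩
    · intro i j; positivity
    · intro i; simp
    · intro i j hi hj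
      rw [filter_indicator_sum (f ⟨i + 1, hi⟩) (j + 1),
        filter_indicator_sum (f ⟨i, Nat.lt_of_succ_lt hi⟩) j]
      have hlt : f ⟨i, Nat.lt_of_succ_lt hi⟩ < f ⟨i + 1, hi⟩ := hf (by simp [Fin.lt_def])
      by_cases h : (f ⟨i + 1, hi⟩ : ℕ) < j + 1
      · have : (f ⟨i, Nat.lt_of_succ_lt hi⟩ : ℕ) < j := by
          have := Fin.lt_def.mp hlt; omega
        simp [h, this]
      · simp only [h, if_false]
        split <;> norm_num
    · ext i j'
      show N i j' = ∑ k, M i k * (if j' = f k then (1 : ℤ) else 0)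
      by_cases h : ∃ k, f k = j'
      · obtain ⟨k, hk⟩ := h
        rw [Finset.sum_eq_single k]
        · rw [← hk]; simp [hagree]
        · intro b _ hb
          have : j' ≠ f b := fun he => hb (hf.injective ((he.symm).trans hk.symm))
          simp [this]
        · simp
      · push_neg at h
        rw [hzero i j' h]
        rw [Finset.sum_eq_zero]
        intro k _
        simp [Ne.symm (h k)]
  · rintro ⟨S, ⟨-, hnn, hsum, hmono⟩, rfl⟩
    choose f hf using fun k => row_indicator (S k) (hnn k) (hsum k)
    have hstep : ∀ (i : ℕ) (hi : i + 1 < c),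
        f ⟨i, Nat.lt_of_succ_lt hi⟩ < f ⟨i + 1, hi⟩ := by
      intro i hi
      have hcond := hmono i (f ⟨i + 1, hi⟩ : ℕ) hi (f ⟨i + 1, hi⟩).isLt
      have hL : ∑ l ∈ Finset.univ.filter
          (fun l : Fin c' => (l : ℕ) < (f ⟨i + 1, hi⟩ : ℕ) + 1), S ⟨i + 1, hi⟩ l = 1 := by
        rw [Finset.sum_congr rfl fun l _ => hf ⟨i + 1, hi⟩ l,
          filter_indicator_sum]
        simp
      have hR : ∑ l ∈ Finset.univ.filter
          (fun l : Fin c' => (l : ℕ) < (f ⟨i + 1, hi⟩ : ℕ)), S ⟨i, Nat.lt_of_succ_lt hi⟩ l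
          = if (f ⟨i, Nat.lt_of_succ_lt hi⟩ : ℕ) < (f ⟨i + 1, hi⟩ : ℕ) then 1 else 0 := by
        rw [Finset.sum_congr rfl fun l _ => hf ⟨i, Nat.lt_of_succ_lt hi⟩ l,
          filter_indicator_sum]
      rw [hL, hR] at hcond
      rw [Fin.lt_def]
      by_contra h
      simp [h] at hcond
    have hsm : StrictMono f := by
      cases c with
      | zero => exact fun a => a.elim0
      | succ n =>
        rw [Fin.strictMono_iff_lt_succ]
        intro i
        exact hstep i (by omega)
    refine ⟨f, hsm, ?_, ?_⟩
    · intro i j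
      rw [Matrix.mul_apply, Finset.sum_eq_single j]
      · rw [hf j (f j)]; simp
      · intro b _ hb
        rw [hf b (f j)]
        have : f j ≠ f b := fun he => hb (hsm.injective he.symm)
        simp [this]
      · simp
    · intro i j' hj'
      rw [Matrix.mul_apply, Finset.sum_eq_zero]
      intro k _
      rw [hf k j']
      simp [Ne.symm (hj' k) ]
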